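/- Let (A, ·, ω) be a simple n-Lie Poisson algebra over a field of characteristic zero. If elements a₂, …, aₙ ∈ A satisfy ad(a₂,…,aₙ)ᵐ = 0 for some m ≥ 1, where ad(a₂,…,aₙ)(b) = ω(b, a₂,…,aₙ), then ad(a₂,…,aₙ) = 0, i.e., ω(b, a₂,…,aₙ) = 0 for all b ∈ A. -/

import Mathlib

open Finset

section Aux

variable {A : Type*} [CommRing A]

private lemma aux_d_zero (d : A → A) (hadd : ∀ x y : A, d (x + y) = d x + d y) :
    d 0 = 0 := by
  have h : d 0 + 0 = d 0 + d 0 := by simpa using (hadd 0 0).symm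
  exact (add_left_cancel h).symm

private lemma aux_d_one (d : A → A)
    (hmul : ∀ x y : A, d (x * y) = x * d y + d x * y) : d 1 = 0 := by
  have h := hmul 1 1
  simp only [one_mul, mul_one] at h
  have h2 : d 1 + d 1 = d 1 + 0 := by rw [← h]; ring
  exact add_left_cancel h2

private lemma aux_pow_rule (d : A → A)
    (hmul : ∀ x y : A, d (x * y) = x * d y + d x * y) (n : ℕ) (x : A) :
    d (x ^ (n + 1)) = ((n : A) + 1) * (x ^ n * d x) := by
  induction n with
  | zero => simp [pow_one]
  | succ n ih =>
    have : x ^ (n + 2) = x ^ (n + 1) * x := by ring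
    rw [this, hmul, ih]
    push_cast
    ring

private lemma aux_d_nilpotent (d : A → A)
    (hadd : ∀ x y : A, d (x + y) = d x + d y)
    (hmul : ∀ x y : A, d (x * y) = x * d y + d x * y)
    (htf : ∀ (n : ℕ) (z : A), n ≠ 0 → (n : A) * z = 0 → z = 0)
    (x : A) (hx : IsNilpotent x) : IsNilpotent (d x) := by
  obtain ⟨n, hn⟩ := hx
  suffices H : ∀ t, t ≤ n → x ^ (n - t) * d x ^ (2 * t) = 0 by
    refine ⟨2 * n, ?_⟩
    simpa using H n le_rfl
  intro t
  induction t with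
  | zero => intro _; simpa using hn
  | succ t ih =>
    intro ht
    have h1 : x ^ (n - t) * d x ^ (2 * t) = 0 := ih (Nat.le_of_succ_le ht)
    obtain ⟨s, hs⟩ : ∃ s, n - t = s + 1 := ⟨n - t - 1, by omega⟩
    have hgoal_idx : n - (t + 1) = s := by omega
    rw [hs] at h1
    -- apply d to h1 and multiply by d x
    have h2 : d (x ^ (s + 1) * d x ^ (2 * t)) = 0 := by
      rw [h1]; exact aux_d_zero d hadd
    rw [hmul, aux_pow_rule d hmul] at h2
    -- now h2 : x^(s+1) * d (dx^(2t)) + ((s:A)+1) * (x^s * d x) * dx^(2t) = 0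
    have key : ((s : A) + 1) * (x ^ s * d x ^ (2 * (t + 1))) = 0 := by
      rcases Nat.eq_zero_or_pos t with rfl | htpos
      · -- 2*t = 0
        simp only [Nat.mul_zero, pow_zero, aux_d_one d hmul, mul_zero, zero_add] at h2
        linear_combination h2 * d x
      · obtain ⟨r, hr⟩ : ∃ r, 2 * t = r + 1 := ⟨2 * t - 1, by omega⟩
        rw [hr, aux_pow_rule d hmul] at h2
        have h3 := congrArg (· * d x) h2
        simp only [zero_mul] at h3
        -- expand
        have e1 : (x ^ (s + 1) * (((r : A) + 1) * (d x ^ r * d (d x))) +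
            ((s : A) + 1) * (x ^ s * d x) * d x ^ (r + 1)) * d x
            = ((r : A) + 1) * d (d x) * (x ^ (s + 1) * d x ^ (r + 1))
              + ((s : A) + 1) * (x ^ s * d x ^ (r + 1 + 2)) := by ring
        rw [e1] at h3
        rw [hr] at h1
        rw [h1, mul_zero, zero_add] at h3
        have h2t : 2 * (t + 1) = 2 * t + 2 := by ring
        rw [h2t, hr]
        exact h3
    have := htf (s + 1) (x ^ s * d x ^ (2 * (t + 1))) (by omega)
      (by push_cast; exact key)
    rw [hgoal_idx]
    exact this

private lemma aux_iterate_leibniz (d : A → A)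
    (hadd : ∀ x y : A, d (x + y) = d x + d y)
    (hmul : ∀ x y : A, d (x * y) = x * d y + d x * y) (n : ℕ) (x y : A) :
    d^[n] (x * y) = ∑ ij ∈ antidiagonal n, n.choose ij.1 • (d^[ij.1] x * d^[ij.2] y) := by
  have hD : ∀ (s : Finset (ℕ × ℕ)) (f : ℕ × ℕ → A),
      d (∑ ij ∈ s, f ij) = ∑ ij ∈ s, d (f ij) := by
    intro s f
    exact map_sum (AddMonoidHom.mk' d hadd) f s
  have hDn : ∀ (c : ℕ) (z : A), d (c • z) = c • d z := by
    intro c z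
    induction c with
    | zero => simpa using aux_d_zero d hadd
    | succ c ih => rw [succ_nsmul, hadd, ih, ← succ_nsmul]
  induction n with
  | zero => simp
  | succ n ih =>
    rw [Finset.sum_antidiagonal_choose_succ_nsmul (fun i j => d^[i] x * d^[j] y) n]
    rw [Function.iterate_succ_apply', ih, hD]
    simp only [hDn, hmul, smul_add, sum_add_distrib, Function.iterate_succ_apply']
    congr 1
    refine sum_congr rfl fun ⟨i, j⟩ hij ↦ ?_
    rw [n.choose_symm_of_eq_add (Finset.HasAntidiagonal.mem_antidiagonal.1 hij).symm]

end Aux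

/-- In a simple n-Lie Poisson algebra over a field of characteristic zero,
if ad(a₂,…,aₙ)ᵐ = 0 for some m ≥ 1 then ad(a₂,…,aₙ) = 0. -/
theorem simple_nLiePoisson_ad_nilpotent_eq_zero
    (F : Type*) [Field F] [CharZero F] (A : Type*) [CommRing A] [Algebra F A]
    (m : ℕ) (ω : A [⋀^Fin (m + 2)]→ₗ[F] A)
    (hJac : ∀ (x : Fin (m + 2) → A) (y : Fin (m + 1) → A),
      ω (Fin.cons (ω x) y) =
        ∑ i, ω (Function.update x i (ω (Fin.cons (x i) y))))
    (hLeib : ∀ (a b : A) (u : Fin (m + 1) → A),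
      ω (Fin.cons (a * b) u) = a * ω (Fin.cons b u) + ω (Fin.cons a u) * b)
    (hSimple : ∀ I : Ideal A,
      (∀ x ∈ I, ∀ v : Fin (m + 1) → A, ω (Fin.cons x v) ∈ I) → I = ⊥ ∨ I = ⊤)
    (a : Fin (m + 1) → A) (k : ℕ) (hk : 1 ≤ k)
    (hnil : ∀ b : A, (fun b => ω (Fin.cons b a))^[k] b = 0) :
    ∀ b : A, ω (Fin.cons b a) = 0 := by
  -- additivity of each ad map
  have hadd : ∀ (v : Fin (m + 1) → A) (x y : A),
      ω (Fin.cons (x + y) v) = ω (Fin.cons x v) + ω (Fin.cons y v) := by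
    intro v x y
    have h := ω.map_update_add (Fin.cons (0 : A) v) 0 x y
    simpa [Fin.update_cons_zero] using h
  have hmul : ∀ (v : Fin (m + 1) → A) (x y : A),
      ω (Fin.cons (x * y) v) = x * ω (Fin.cons y v) + ω (Fin.cons x v) * y := by
    intro v x y
    exact hLeib x y v
  -- torsion-freeness from char zero
  have htf : ∀ (n : ℕ) (z : A), n ≠ 0 → (n : A) * z = 0 → z = 0 := by
    intro n z hn h
    have h1 : ((n : F)) • z = 0 := by
      rw [Algebra.smul_def]
      simpa [map_natCast] using h
    have h2 : ((n : F))⁻¹ • ((n : F) • z) = 0 := by rw [h1, smul_zero]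
    rwa [inv_smul_smul₀ (by exact_mod_cast hn) z] at h2
  -- the nilradical is a bracket-closed ideal
  have hNrad := hSimple (nilradical A) (by
    intro x hx v
    rw [mem_nilradical] at hx ⊢
    exact aux_d_nilpotent (fun b => ω (Fin.cons b v)) (hadd v)
      (fun x y => hmul v x y) htf x hx)
  rcases hNrad with hbot | htop
  · -- A is reduced
    have hred : ∀ z : A, z * z = 0 → z = 0 := by
      intro z hz
      have : z ∈ nilradical A := mem_nilradical.2 ⟨2, by rw [pow_two]; exact hz⟩
      rw [hbot] at this
      simpa using this
    set d : A → A := fun b => ω (Fin.cons b a) with hd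
    have hda : ∀ x y : A, d (x + y) = d x + d y := hadd a
    have hdm : ∀ x y : A, d (x * y) = x * d y + d x * y := fun x y => hmul a x y
    have hd0 : d 0 = 0 := aux_d_zero d hda
    have hiter0 : ∀ (p : ℕ), d^[p] 0 = 0 := fun p => Function.iterate_fixed hd0 p
    -- descent step
    have step : ∀ j : ℕ, (∀ b : A, d^[j + 2] b = 0) → ∀ b : A, d^[j + 1] b = 0 := by
      intro j hj x
      have hvanish : ∀ i : ℕ, j + 2 ≤ i → d^[i] x = 0 := by
        intro i hi
        obtain ⟨p, rfl⟩ : ∃ p, i = p + (j + 2) := ⟨i - (j + 2), by omega⟩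
        rw [Function.iterate_add_apply, hj x, hiter0]
      have h0 : d^[2 * (j + 1)] (x * x) = 0 := by
        have : 2 * (j + 1) = j + (j + 2) := by ring
        rw [this, Function.iterate_add_apply, hj (x * x), hiter0]
      rw [aux_iterate_leibniz d hda hdm] at h0
      rw [Finset.Nat.sum_antidiagonal_eq_sum_range_succ
        (fun i j' => (2 * (j + 1)).choose i • (d^[i] x * d^[j'] x))] at h0
      rw [Finset.sum_eq_single (j + 1)] at h0
      · -- h0 : (2*(j+1)).choose (j+1) • (d^[j+1] x * d^[j+1] x) = 0
        have hch : (2 * (j + 1)).choose (j + 1) ≠ 0 :=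
          (Nat.choose_pos (by omega)).ne'
        have hz : d^[j + 1] x * d^[j + 1] x = 0 := by
          apply htf _ _ hch
          rw [← nsmul_eq_mul]
          have : 2 * (j + 1) - (j + 1) = j + 1 := by omega
          rw [this] at h0
          exact h0
        exact hred _ hz
      · intro i hi hne
        rcases Nat.lt_or_ge i (j + 1) with hlt | hge
        · have : j + 2 ≤ 2 * (j + 1) - i := by omega
          rw [hvanish _ this, mul_zero, smul_zero]
        · have : j + 2 ≤ i := by omega
          rw [hvanish _ this, zero_mul, smul_zero]
      · intro h
        exact absurd (Finset.mem_range.2 (by omega)) h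
    -- downward induction from k to 1
    have main : ∀ j : ℕ, (∀ b : A, d^[j + 1] b = 0) → ∀ b : A, d b = 0 := by
      intro j
      induction j with
      | zero => intro h b; simpa using h b
      | succ j ih => intro h; exact ih (step j h)
    intro b
    obtain ⟨k', rfl⟩ : ∃ k', k = k' + 1 := ⟨k - 1, by omega⟩
    exact main k' (fun b => hnil b) b
  · -- nilradical = ⊤ : the ring is trivial
    have h1 : (1 : A) ∈ nilradical A := htop ▸ Submodule.mem_top
    obtain ⟨n, hn⟩ := mem_nilradical.1 h1
    rw [one_pow] at hn
    intro b
    calc ω (Fin.cons b a) = ω (Fin.cons b a) * 1 := by rw [mul_one]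
      _ = 0 := by rw [hn, mul_zero]
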